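/- For every pair of integers p ≥ 1 and n ≥ 2^{(8p)^{p+1}}, there exists an integer β ≥ 2 such that n ≤ 2^{β^{p+1}} ≤ n². -/

import Mathlib

lemma aux_pow17 (m k : ℕ) : (m + 1) ^ k * (m - k) ≤ m ^ (k + 1) := by
  induction k with
  | zero => simp
  | succ k ih =>
    have h1 : (m + 1) * (m - (k + 1)) ≤ m * (m - k) := by
      rcases le_or_gt m (k + 1) with h | h
      · simp [Nat.sub_eq_zero_of_le h]
      · have hk1 : k + 1 ≤ m := le_of_lt h
        have hk : k ≤ m := by omega
        zify [hk1, hk]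
        nlinarith
    calc (m + 1) ^ (k + 1) * (m - (k + 1))
        = (m + 1) ^ k * ((m + 1) * (m - (k + 1))) := by ring
      _ ≤ (m + 1) ^ k * (m * (m - k)) := Nat.mul_le_mul_left _ h1
      _ = ((m + 1) ^ k * (m - k)) * m := by ring
      _ ≤ m ^ (k + 1) * m := Nat.mul_le_mul_right _ ih
      _ = m ^ (k + 1 + 1) := by ring

/-- For every pair of integers `p ≥ 1` and `n ≥ 2^{(8p)^{p+1}}` there exists an integer
`β ≥ 2` such that `n ≤ 2^{β^{p+1}} ≤ n²`. -/
theorem stmt17 (p n : ℕ) (hp : 1 ≤ p) (hn : 2 ^ (8 * p) ^ (p + 1) ≤ n) :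
    ∃ β : ℕ, 2 ≤ β ∧ n ≤ 2 ^ β ^ (p + 1) ∧ 2 ^ β ^ (p + 1) ≤ n ^ 2 := by
  classical
  have hS : ∃ b : ℕ, n ≤ 2 ^ b ^ (p + 1) := by
    refine ⟨n + 2, ?_⟩
    have h1 : n < 2 ^ n := Nat.lt_two_pow_self (n := n)
    have h2 : n ≤ (n + 2) ^ (p + 1) := by
      calc n ≤ n + 2 := by omega
        _ = (n + 2) ^ 1 := (pow_one _).symm
        _ ≤ (n + 2) ^ (p + 1) := Nat.pow_le_pow_right (by omega) (by omega)
    exact le_trans (le_of_lt h1) (Nat.pow_le_pow_right (by omega) h2)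
  set β := Nat.find hS with hβdef
  have hmem : n ≤ 2 ^ β ^ (p + 1) := Nat.find_spec hS
  have hβ8 : 8 * p ≤ β := by
    by_contra h
    push_neg at h
    have hlt : 2 ^ β ^ (p + 1) < 2 ^ (8 * p) ^ (p + 1) := by
      apply Nat.pow_lt_pow_right one_lt_two
      exact Nat.pow_lt_pow_left h (by omega)
    omega
  have hβ1 : 1 ≤ β := by omega
  set m := β - 1 with hm
  have hβm : β = m + 1 := by omega
  have hm8 : 8 * p - 1 ≤ m := by omega
  have hmin : 2 ^ m ^ (p + 1) < n := by
    have := Nat.find_min hS (show m < β by omega)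
    omega
  -- key bound : β ^ (p+1) ≤ 2 * m ^ (p+1)
  have hkey : β ^ (p + 1) ≤ 2 * m ^ (p + 1) := by
    have haux := aux_pow17 m (p + 1)
    have hmsub : 0 < m - (p + 1) := by omega
    have hm2 : m ≤ 2 * (m - (p + 1)) := by omega
    have h3 : m ^ (p + 1 + 1) ≤ 2 * m ^ (p + 1) * (m - (p + 1)) := by
      calc m ^ (p + 1 + 1) = m ^ (p + 1) * m := by ring
        _ ≤ m ^ (p + 1) * (2 * (m - (p + 1))) := Nat.mul_le_mul_left _ hm2
        _ = 2 * m ^ (p + 1) * (m - (p + 1)) := by ring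
    have h4 : (m + 1) ^ (p + 1) * (m - (p + 1)) ≤ 2 * m ^ (p + 1) * (m - (p + 1)) :=
      le_trans haux h3
    have h5 : (m + 1) ^ (p + 1) ≤ 2 * m ^ (p + 1) :=
      Nat.le_of_mul_le_mul_right h4 hmsub
    rw [hβm]; exact h5
  refine ⟨β, by omega, hmem, ?_⟩
  calc 2 ^ β ^ (p + 1) ≤ 2 ^ (2 * m ^ (p + 1)) := Nat.pow_le_pow_right (by omega) hkey
    _ = (2 ^ m ^ (p + 1)) ^ 2 := by rw [← pow_mul, mul_comm]
    _ ≤ n ^ 2 := Nat.pow_le_pow_left (le_of_lt hmin) 2
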